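/- Let ⟨x,y⟩₁ = −x₀y₀ + x₁y₁ + x₂y₂ + x₃y₃ + x₄y₄ denote the Lorentzian bilinear form on ℝ⁵, let a be a nonzero real number, let A : ℝ → ℝ be differentiable, and for s ≠ 0 define x(s,t,u) = (a A(s)²/s + a s(t² + u²) + s/(4a) + a/s, s t, s u, A(s), a A(s)²/s + a s(t² + u²) − s/(4a) + a/s). Then for all (s,t,u) with s ≠ 0: ⟨x, x⟩₁ = −1 (so x takes values in H⁴ = {x ∈ ℝ⁵ : ⟨x,x⟩₁ = −1}), and ⟨∂ₛx, ∂ₛx⟩₁ = ((A(s) − s A'(s))² + 1)/s², ⟨∂ₜx, ∂ₜx⟩₁ = s², ⟨∂ᵤx, ∂ᵤx⟩₁ = s², with ⟨∂ₛx, ∂ₜx⟩₁ = ⟨∂ₛx, ∂ᵤx⟩₁ = ⟨∂ₜx, ∂ᵤx⟩₁ = 0. -/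

import Mathlib

/-- The Lorentzian bilinear form on `ℝ⁵` with timelike coordinate `x₀`. -/
def lor5 (x y : Fin 5 → ℝ) : ℝ :=
  -(x 0 * y 0) + x 1 * y 1 + x 2 * y 2 + x 3 * y 3 + x 4 * y 4

set_option maxHeartbeats 2000000 in
/-- Case (4) of Theorem 4.8: the hypersurface (4.10) of `H⁴ ⊂ ℝ⁵₁` lies in `H⁴`
and has induced metric `(((A − sA')² + 1)/s²)ds² + s²dt² + s²du²`. -/
theorem stmt_16 (a : ℝ) (ha : a ≠ 0) (A : ℝ → ℝ) (hA : Differentiable ℝ A)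
    (x : ℝ → ℝ → ℝ → Fin 5 → ℝ)
    (hx : ∀ s t u : ℝ, s ≠ 0 → x s t u =
      ![a * A s ^ 2 / s + a * s * (t ^ 2 + u ^ 2) + s / (4 * a) + a / s,
        s * t, s * u, A s,
        a * A s ^ 2 / s + a * s * (t ^ 2 + u ^ 2) - s / (4 * a) + a / s]) :
    ∀ s t u : ℝ, s ≠ 0 →
      lor5 (x s t u) (x s t u) = -1 ∧
      lor5 (deriv (fun s' => x s' t u) s) (deriv (fun s' => x s' t u) s)
        = ((A s - s * deriv A s) ^ 2 + 1) / s ^ 2 ∧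
      lor5 (deriv (fun t' => x s t' u) t) (deriv (fun t' => x s t' u) t) = s ^ 2 ∧
      lor5 (deriv (fun u' => x s t u') u) (deriv (fun u' => x s t u') u) = s ^ 2 ∧
      lor5 (deriv (fun s' => x s' t u) s) (deriv (fun t' => x s t' u) t) = 0 ∧
      lor5 (deriv (fun s' => x s' t u) s) (deriv (fun u' => x s t u') u) = 0 ∧
      lor5 (deriv (fun t' => x s t' u) t) (deriv (fun u' => x s t u') u) = 0 := by
  intro s t u hs
  have hA' : HasDerivAt A (deriv A s) s := (hA s).hasDerivAt
  set A' := deriv A s with hA'def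
  -- explicit s-derivative
  have hvs : HasDerivAt (fun s' => (![a * A s' ^ 2 / s' + a * s' * (t ^ 2 + u ^ 2) + s' / (4 * a) + a / s',
        s' * t, s' * u, A s',
        a * A s' ^ 2 / s' + a * s' * (t ^ 2 + u ^ 2) - s' / (4 * a) + a / s'] : Fin 5 → ℝ))
      (![(a * (2 * A s ^ 1 * A') * s - a * A s ^ 2 * 1) / s ^ 2 + a * (t ^ 2 + u ^ 2) + 1 / (4 * a) + a * (-(s ^ 2)⁻¹),
        1 * t, 1 * u, A',
        (a * (2 * A s ^ 1 * A') * s - a * A s ^ 2 * 1) / s ^ 2 + a * (t ^ 2 + u ^ 2) - 1 / (4 * a) + a * (-(s ^ 2)⁻¹)] : Fin 5 → ℝ) s := by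
    have h1 : HasDerivAt (fun s' => a * A s' ^ 2 / s')
        ((a * (2 * A s ^ 1 * A') * s - a * A s ^ 2 * 1) / s ^ 2) s :=
      ((hA'.pow 2).const_mul a).div (hasDerivAt_id s) hs
    have h2 : HasDerivAt (fun s' : ℝ => a * s' * (t ^ 2 + u ^ 2)) (a * 1 * (t ^ 2 + u ^ 2)) s :=
      ((hasDerivAt_id s).const_mul a).mul_const _
    have h3 : HasDerivAt (fun s' : ℝ => s' / (4 * a)) (1 / (4 * a)) s :=
      (hasDerivAt_id s).div_const _
    have h4 : HasDerivAt (fun s' : ℝ => a / s') (a * (-(s ^ 2)⁻¹)) s := by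
      simpa [div_eq_mul_inv] using (hasDerivAt_inv hs).const_mul a
    rw [hasDerivAt_pi]
    intro i
    fin_cases i <;> simp only [Matrix.cons_val_zero, Matrix.cons_val_one, Matrix.head_cons,
      Matrix.cons_val_two, Matrix.tail_cons, Matrix.cons_val_three, Matrix.cons_val_four]
    · have := ((h1.add h2).add h3).add h4
      simpa [mul_one, Pi.add_def, Pi.sub_def] using this
    · exact (hasDerivAt_id s).mul_const t
    · exact (hasDerivAt_id s).mul_const u
    · exact hA'
    · have := ((h1.add h2).sub h3).add h4
      simpa [mul_one, Pi.add_def, Pi.sub_def] using this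
  have hev : (fun s' => x s' t u) =ᶠ[nhds s]
      (fun s' => (![a * A s' ^ 2 / s' + a * s' * (t ^ 2 + u ^ 2) + s' / (4 * a) + a / s',
        s' * t, s' * u, A s',
        a * A s' ^ 2 / s' + a * s' * (t ^ 2 + u ^ 2) - s' / (4 * a) + a / s'] : Fin 5 → ℝ)) := by
    filter_upwards [eventually_ne_nhds hs] with s' hs' using hx s' t u hs'
  have hds : deriv (fun s' => x s' t u) s =
      (![(a * (2 * A s ^ 1 * A') * s - a * A s ^ 2 * 1) / s ^ 2 + a * (t ^ 2 + u ^ 2) + 1 / (4 * a) + a * (-(s ^ 2)⁻¹),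
        1 * t, 1 * u, A',
        (a * (2 * A s ^ 1 * A') * s - a * A s ^ 2 * 1) / s ^ 2 + a * (t ^ 2 + u ^ 2) - 1 / (4 * a) + a * (-(s ^ 2)⁻¹)] : Fin 5 → ℝ) := by
    rw [hev.deriv_eq]; exact hvs.deriv
  -- t derivative
  have hvt : HasDerivAt (fun t' => (![a * A s ^ 2 / s + a * s * (t' ^ 2 + u ^ 2) + s / (4 * a) + a / s,
        s * t', s * u, A s,
        a * A s ^ 2 / s + a * s * (t' ^ 2 + u ^ 2) - s / (4 * a) + a / s] : Fin 5 → ℝ))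
      (![a * s * (2 * t ^ 1), s * 1, 0, 0, a * s * (2 * t ^ 1)] : Fin 5 → ℝ) t := by
    have h : HasDerivAt (fun t' : ℝ => a * s * (t' ^ 2 + u ^ 2)) (a * s * (2 * t ^ 1)) t := by
      simpa using ((hasDerivAt_pow 2 t).add_const (u ^ 2)).const_mul (a * s)
    rw [hasDerivAt_pi]
    intro i
    fin_cases i <;> simp only [Matrix.cons_val_zero, Matrix.cons_val_one, Matrix.head_cons,
      Matrix.cons_val_two, Matrix.tail_cons, Matrix.cons_val_three, Matrix.cons_val_four]
    · exact ((h.const_add _).add_const _).add_const _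
    · exact (hasDerivAt_id t).const_mul s
    · exact hasDerivAt_const t _
    · exact hasDerivAt_const t _
    · have : HasDerivAt (fun t' : ℝ => a * A s ^ 2 / s + a * s * (t' ^ 2 + u ^ 2)) (a * s * (2 * t ^ 1)) t :=
        h.const_add _
      exact (this.sub_const _).add_const _
  have hdt : deriv (fun t' => x s t' u) t =
      (![a * s * (2 * t ^ 1), s * 1, 0, 0, a * s * (2 * t ^ 1)] : Fin 5 → ℝ) := by
    have : (fun t' => x s t' u) = (fun t' => (![a * A s ^ 2 / s + a * s * (t' ^ 2 + u ^ 2) + s / (4 * a) + a / s,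
        s * t', s * u, A s,
        a * A s ^ 2 / s + a * s * (t' ^ 2 + u ^ 2) - s / (4 * a) + a / s] : Fin 5 → ℝ)) := by
      funext t'; exact hx s t' u hs
    rw [this]; exact hvt.deriv
  -- u derivative
  have hvu : HasDerivAt (fun u' => (![a * A s ^ 2 / s + a * s * (t ^ 2 + u' ^ 2) + s / (4 * a) + a / s,
        s * t, s * u', A s,
        a * A s ^ 2 / s + a * s * (t ^ 2 + u' ^ 2) - s / (4 * a) + a / s] : Fin 5 → ℝ))
      (![a * s * (2 * u ^ 1), 0, s * 1, 0, a * s * (2 * u ^ 1)] : Fin 5 → ℝ) u := by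
    have h : HasDerivAt (fun u' : ℝ => a * s * (t ^ 2 + u' ^ 2)) (a * s * (2 * u ^ 1)) u := by
      simpa using ((hasDerivAt_pow 2 u).const_add (t ^ 2)).const_mul (a * s)
    rw [hasDerivAt_pi]
    intro i
    fin_cases i <;> simp only [Matrix.cons_val_zero, Matrix.cons_val_one, Matrix.head_cons,
      Matrix.cons_val_two, Matrix.tail_cons, Matrix.cons_val_three, Matrix.cons_val_four]
    · exact ((h.const_add _).add_const _).add_const _
    · exact hasDerivAt_const u _
    · exact (hasDerivAt_id u).const_mul s
    · exact hasDerivAt_const u _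
    · have : HasDerivAt (fun u' : ℝ => a * A s ^ 2 / s + a * s * (t ^ 2 + u' ^ 2)) (a * s * (2 * u ^ 1)) u :=
        h.const_add _
      exact (this.sub_const _).add_const _
  have hdu : deriv (fun u' => x s t u') u =
      (![a * s * (2 * u ^ 1), 0, s * 1, 0, a * s * (2 * u ^ 1)] : Fin 5 → ℝ) := by
    have : (fun u' => x s t u') = (fun u' => (![a * A s ^ 2 / s + a * s * (t ^ 2 + u' ^ 2) + s / (4 * a) + a / s,
        s * t, s * u', A s,
        a * A s ^ 2 / s + a * s * (t ^ 2 + u' ^ 2) - s / (4 * a) + a / s] : Fin 5 → ℝ)) := by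
      funext u'; exact hx s t u' hs
    rw [this]; exact hvu.deriv
  rw [hx s t u hs, hds, hdt, hdu]
  simp only [lor5, Matrix.cons_val_zero, Matrix.cons_val_one, Matrix.head_cons,
    Matrix.cons_val_two, Matrix.tail_cons, Matrix.cons_val_three, Matrix.cons_val_four]
  refine ⟨by field_simp; try ring, by field_simp; try ring, by field_simp; try ring, by field_simp; try ring,
    by field_simp; try ring, by field_simp; try ring, by field_simp; try ring⟩
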